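/- arXiv:2511.05942 — 2 statements merged into one kernel-verified Lean document; each statement's English description precedes it below -/
import Mathlib

section
/- The function H(z) = z + \left(1 - z\frac{\cosh z}{\sinh z}\right)\frac{\cosh z}{\sinh z} is strictly positive for all z > 0. -/
open Real

/-- `H(z) = z + (1 - z coth z) coth z > 0` for all `z > 0`. -/
theorem H_pos (z : ℝ) (hz : 0 < z) :
    0 < z + (1 - z * (Real.cosh z / Real.sinh z)) * (Real.cosh z / Real.sinh z) := by
  have hs : 0 < Real.sinh z := Real.sinh_pos_iff.mpr hz
  have h2 : 2 * z < Real.sinh (2 * z) := Real.self_lt_sinh_iff.mpr (by linarith)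
  rw [Real.sinh_two_mul] at h2
  have hid : Real.cosh z ^ 2 - Real.sinh z ^ 2 = 1 := Real.cosh_sq_sub_sinh_sq z
  have key : z < Real.sinh z * Real.cosh z := by linarith
  have h : z + (1 - z * (Real.cosh z / Real.sinh z)) * (Real.cosh z / Real.sinh z)
      = (Real.sinh z * Real.cosh z - z) / Real.sinh z ^ 2 := by
    field_simp
    ring_nf
    linear_combination (-z) * hid
  rw [h]
  exact div_pos (by linarith) (by positivity)
end

section
/- For z > 0, the derivative of H(z) = z + (1 - z\coth z)\coth z equals \frac{2}{\sinh^3 z}(z\cosh z - \sinh z), and this is strictly positive; consequently H is strictly increasing on (0, \infty). -/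
open Real

lemma aux_sinh_lt (z : ℝ) (hz : 0 < z) : Real.sinh z < z * Real.cosh z := by
  have hd : ∀ x : ℝ, HasDerivAt (fun x => x * Real.cosh x - Real.sinh x)
      (x * Real.sinh x) x := by
    intro x
    have h1 := ((hasDerivAt_id x).mul (Real.hasDerivAt_cosh x)).sub (Real.hasDerivAt_sinh x)
    refine h1.congr_deriv ?_
    simp only [id_eq, one_mul]
    ring
  have hmono : StrictMonoOn (fun x => x * Real.cosh x - Real.sinh x) (Set.Ici 0) := by
    apply strictMonoOn_of_deriv_pos (convex_Ici 0)
    · exact fun x _ => ((hd x).continuousAt).continuousWithinAt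
    · intro x hx
      rw [interior_Ici] at hx
      rw [(hd x).deriv]
      exact mul_pos hx (Real.sinh_pos_iff.2 hx)
  have := hmono (Set.self_mem_Ici) (Set.mem_Ici.2 hz.le) hz
  simpa using this

/-- For `z > 0`, the derivative of `H(z) = z + (1 - z coth z) coth z` equals
`(2/sinh³ z)(z cosh z - sinh z)`, this is strictly positive, and consequently
`H` is strictly increasing on `(0,∞)`. -/
theorem H_deriv_and_strictMono :
    (∀ z : ℝ, 0 < z →
      HasDerivAt
        (fun z : ℝ => z + (1 - z * (Real.cosh z / Real.sinh z)) * (Real.cosh z / Real.sinh z))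
        (2 / (Real.sinh z)^3 * (z * Real.cosh z - Real.sinh z)) z ∧
      0 < 2 / (Real.sinh z)^3 * (z * Real.cosh z - Real.sinh z)) ∧
    StrictMonoOn
      (fun z : ℝ => z + (1 - z * (Real.cosh z / Real.sinh z)) * (Real.cosh z / Real.sinh z))
      (Set.Ioi (0 : ℝ)) := by
  have key : ∀ z : ℝ, 0 < z →
      HasDerivAt
        (fun z : ℝ => z + (1 - z * (Real.cosh z / Real.sinh z)) * (Real.cosh z / Real.sinh z))
        (2 / (Real.sinh z)^3 * (z * Real.cosh z - Real.sinh z)) z ∧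
      0 < 2 / (Real.sinh z)^3 * (z * Real.cosh z - Real.sinh z) := by
    intro z hz
    have hs : 0 < Real.sinh z := Real.sinh_pos_iff.2 hz
    have hcoth : HasDerivAt (fun z => Real.cosh z / Real.sinh z)
        ((Real.sinh z * Real.sinh z - Real.cosh z * Real.cosh z) / Real.sinh z ^ 2) z :=
      (Real.hasDerivAt_cosh z).div (Real.hasDerivAt_sinh z) hs.ne'
    have hd := (hasDerivAt_id z).add
      (((hasDerivAt_const z (1:ℝ)).sub ((hasDerivAt_id z).mul hcoth)).mul hcoth)
    constructor
    · refine hd.congr_deriv ?_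
      symm
      simp only [Pi.sub_apply, Pi.mul_apply, id_eq]
      have hc2 : Real.cosh z ^ 2 = Real.sinh z ^ 2 + 1 := by
        rw [Real.cosh_sq]
      field_simp
      ring_nf
      linear_combination (2*Real.sinh z - 2*z*Real.cosh z) * hc2
    · apply mul_pos
      · positivity
      · linarith [aux_sinh_lt z hz]
  refine ⟨key, ?_⟩
  apply strictMonoOn_of_deriv_pos (convex_Ioi 0)
  · exact fun x hx => ((key x hx).1).continuousAt.continuousWithinAt
  · intro x hx
    rw [interior_Ioi] at hx
    rw [((key x hx).1).deriv]
    exact (key x hx).2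
end
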